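/- Let r ≥ 6 be an integer and let H be a multicolored cluster graph with color set {1,…,r} that is K₃⁽²⁾-free and in which every edge e satisfies |L_e| ≥ 2. Then for every 2-element subset S ⊆ {1,…,r}, the subgraph of H whose edge set consists of all edges e with |L_e| ≥ r−3 together with all edges e with |L_e| ≤ r−4 and L_e ∩ S ≠ ∅ is triangle-free. -/
import Mathlib


open SimpleGraph

/-- A multicolored cluster graph `(H, L)` is `K₃⁽²⁾`-free if for every triangle of `H`
the three lists of its edges are pairwise disjoint. -/
def ClusterK32Free {V : Type*} {r : ℕ} (H : SimpleGraph V)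
    (L : H.edgeSet → Finset (Fin r)) : Prop :=
  ∀ (a b d : V) (hab : H.Adj a b) (hbd : H.Adj b d) (had : H.Adj a d),
    Disjoint (L ⟨s(a, b), hab⟩) (L ⟨s(b, d), hbd⟩) ∧
    Disjoint (L ⟨s(a, b), hab⟩) (L ⟨s(a, d), had⟩) ∧
    Disjoint (L ⟨s(b, d), hbd⟩) (L ⟨s(a, d), had⟩)

/-- The edge `e` belongs to the subgraph consisting of the edges with `|L_e| ≥ r - 3`
together with the edges with `|L_e| ≤ r - 4` and `L_e ∩ S ≠ ∅`. -/
def InSub {V : Type*} {r : ℕ} (H : SimpleGraph V) (L : H.edgeSet → Finset (Fin r))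
    (S : Finset (Fin r)) (e : H.edgeSet) : Prop :=
  r - 3 ≤ (L e).card ∨ ((L e).card ≤ r - 4 ∧ (L e ∩ S).Nonempty)

theorem stmt13 (r : ℕ) (hr : 6 ≤ r) {V : Type*} (H : SimpleGraph V)
    (L : H.edgeSet → Finset (Fin r))
    (hfree : ClusterK32Free H L)
    (h2 : ∀ e : H.edgeSet, 2 ≤ (L e).card)
    (S : Finset (Fin r)) (hS : S.card = 2) :
    ∀ (a b d : V) (hab : H.Adj a b) (hbd : H.Adj b d) (had : H.Adj a d),
      ¬ (InSub H L S ⟨s(a, b), hab⟩ ∧ InSub H L S ⟨s(b, d), hbd⟩ ∧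
         InSub H L S ⟨s(a, d), had⟩) := by
  intro a b d hab hbd had hcon
  obtain ⟨h1, h2', h3⟩ := hcon
  obtain ⟨dAB, dAC, dBC⟩ := hfree a b d hab hbd had
  set A := L ⟨s(a, b), hab⟩ with hA
  set B := L ⟨s(b, d), hbd⟩ with hB
  set C := L ⟨s(a, d), had⟩ with hC
  have hsum : A.card + B.card + C.card ≤ r := by
    have hd : Disjoint (A ∪ B) C := by
      rw [Finset.disjoint_union_left]; exact ⟨dAC, dBC⟩
    calc A.card + B.card + C.card
        = ((A ∪ B) ∪ C).card := by
          rw [Finset.card_union_of_disjoint hd, Finset.card_union_of_disjoint dAB]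
      _ ≤ Fintype.card (Fin r) := Finset.card_le_univ _
      _ = r := Fintype.card_fin r
  have hA2 : 2 ≤ A.card := h2 _
  have hB2 : 2 ≤ B.card := h2 _
  have hC2 : 2 ≤ C.card := h2 _
  rw [InSub, ← hA] at h1
  rw [InSub, ← hB] at h2'
  rw [InSub, ← hC] at h3
  have hA' : (A ∩ S).Nonempty := by
    rcases h1 with h | h
    · omega
    · exact h.2
  have hB' : (B ∩ S).Nonempty := by
    rcases h2' with h | h
    · omega
    · exact h.2
  have hC' : (C ∩ S).Nonempty := by
    rcases h3 with h | h
    · omega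
    · exact h.2
  obtain ⟨x, hx⟩ := hA'
  obtain ⟨y, hy⟩ := hB'
  obtain ⟨z, hz⟩ := hC'
  rw [Finset.mem_inter] at hx hy hz
  have hxy : x ≠ y := fun h => Finset.disjoint_left.mp dAB hx.1 (h ▸ hy.1)
  have hxz : x ≠ z := fun h => Finset.disjoint_left.mp dAC hx.1 (h ▸ hz.1)
  have hyz : y ≠ z := fun h => Finset.disjoint_left.mp dBC hy.1 (h ▸ hz.1)
  have hsub : ({x, y, z} : Finset (Fin r)) ⊆ S := by
    intro w hw
    simp only [Finset.mem_insert, Finset.mem_singleton] at hw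
    rcases hw with rfl | rfl | rfl
    exacts [hx.2, hy.2, hz.2]
  have hcard : ({x, y, z} : Finset (Fin r)).card = 3 := by
    rw [Finset.card_insert_of_notMem (by simp [hxy, hxz]),
        Finset.card_insert_of_notMem (by simp [hyz]), Finset.card_singleton]
  have := Finset.card_le_card hsub
  omega
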